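/- In the braid group B_n, the band generators a_{ts} and a_{rq} commute whenever (t-r)(t-q)(s-r)(s-q) > 0, i.e., whenever the intervals [s,t] and [q,r] are either disjoint or nested. -/
import Mathlib


/-- `descProd a s k` is the product `a (s+k) * a (s+k-1) * ... * a (s+1)`. -/
def descProd {G : Type*} [Group G] (a : ℕ → G) (s : ℕ) : ℕ → G
  | 0 => 1
  | k + 1 => a (s + k + 1) * descProd a s k

/-- The Birman-Ko-Lee band generator
`a_{ts} = (a_{t-1} a_{t-2} ⋯ a_{s+1}) a_s (a_{s+1}⁻¹ ⋯ a_{t-2}⁻¹ a_{t-1}⁻¹)`. -/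
def band {G : Type*} [Group G] (a : ℕ → G) (t s : ℕ) : G :=
  descProd a s (t - s - 1) * a s * (descProd a s (t - s - 1))⁻¹

section Aux

variable {G : Type*} [Group G] (n : ℕ) (a : ℕ → G)

lemma conj_commute (g x y : G) (h : Commute x y) :
    Commute (g * x * g⁻¹) (g * y * g⁻¹) := by
  show _ = _
  calc g * x * g⁻¹ * (g * y * g⁻¹) = g * (x * y) * g⁻¹ := by group
    _ = g * (y * x) * g⁻¹ := by rw [h.eq]
    _ = g * y * g⁻¹ * (g * x * g⁻¹) := by group

lemma descProd_commute (g : G) (q k : ℕ)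
    (h : ∀ j, q + 1 ≤ j → j ≤ q + k → Commute g (a j)) :
    Commute g (descProd a q k) := by
  induction k with
  | zero => simp only [descProd]; exact Commute.one_right g
  | succ k ih =>
      rw [descProd]
      exact (h (q + k + 1) (by omega) (by omega)).mul_right
        (ih (fun j h1 h2 => h j h1 (by omega)))

variable
    (hbraid : ∀ i, 1 ≤ i → i + 1 ≤ n - 1 →
      a i * a (i + 1) * a i = a (i + 1) * a i * a (i + 1))
    (hcomm : ∀ i j, 1 ≤ i → i + 2 ≤ j → j ≤ n - 1 → a i * a j = a j * a i)

include hcomm in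
lemma gen_commute (i j : ℕ) (h1 : 1 ≤ i) (h2 : i + 2 ≤ j) (h3 : j ≤ n - 1) :
    Commute (a i) (a j) :=
  hcomm i j h1 h2 h3

include hbraid hcomm in
lemma descProd_shift (s : ℕ) :
    ∀ k, ∀ j, s + 1 ≤ j → j + 1 ≤ s + k → s + k ≤ n - 1 →
      descProd a s k * a (j + 1) = a j * descProd a s k := by
  intro k
  induction k with
  | zero => intro j h1 h2 h3; omega
  | succ k ih =>
      intro j h1 h2 h3
      rcases Nat.lt_or_ge (j + 1) (s + k + 1) with h | h
      · -- inner case : j + 1 ≤ s + k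
        rw [descProd, mul_assoc, ih j h1 (by omega) (by omega), ← mul_assoc,
          ← hcomm j (s + k + 1) (by omega) (by omega) (by omega), mul_assoc]
      · -- boundary case : j = s + k
        have hj : j = s + k := by omega
        subst hj
        obtain ⟨m, rfl⟩ : ∃ m, k = m + 1 := ⟨k - 1, by omega⟩
        have hQ : descProd a s m * a (s + m + 2) = a (s + m + 2) * descProd a s m := by
          refine (descProd_commute a _ s m (fun i hi1 hi2 => ?_)).symm.eq
          exact (gen_commute n a hcomm i (s + m + 2) (by omega) (by omega) (by omega)).symm
        have hb : a (s + m + 1) * a (s + m + 2) * a (s + m + 1)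
            = a (s + m + 2) * a (s + m + 1) * a (s + m + 2) :=
          hbraid (s + m + 1) (by omega) (by omega)
        show a (s + (m + 1) + 1) * descProd a s (m + 1) * a (s + m + 1 + 1)
            = a (s + m + 1) * (a (s + (m + 1) + 1) * descProd a s (m + 1))
        show a (s + m + 2) * descProd a s (m + 1) * a (s + m + 2)
            = a (s + m + 1) * (a (s + m + 2) * descProd a s (m + 1))
        rw [show descProd a s (m + 1) = a (s + m + 1) * descProd a s m from rfl]
        calc a (s + m + 2) * (a (s + m + 1) * descProd a s m) * a (s + m + 2)
            = a (s + m + 2) * a (s + m + 1) * (descProd a s m * a (s + m + 2)) := by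
              simp [mul_assoc]
          _ = a (s + m + 2) * a (s + m + 1) * (a (s + m + 2) * descProd a s m) := by rw [hQ]
          _ = a (s + m + 2) * a (s + m + 1) * a (s + m + 2) * descProd a s m := by
              simp [mul_assoc]
          _ = a (s + m + 1) * a (s + m + 2) * a (s + m + 1) * descProd a s m := by rw [← hb]
          _ = a (s + m + 1) * (a (s + m + 2) * (a (s + m + 1) * descProd a s m)) := by
              simp [mul_assoc]

include hbraid hcomm in
/-- nested case: `s < j`, `j + 2 ≤ t`. -/
lemma gen_band_commute_inner (t s j : ℕ) (hs : 1 ≤ s) (h1 : s + 1 ≤ j)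
    (h2 : j + 2 ≤ t) (h3 : t ≤ n) :
    Commute (a j) (band a t s) := by
  set P := descProd a s (t - s - 1) with hP
  have hshift : P * a (j + 1) = a j * P :=
    descProd_shift n a hbraid hcomm s (t - s - 1) j h1 (by omega) (by omega)
  have hja : a j = P * a (j + 1) * P⁻¹ := (eq_mul_inv_iff_mul_eq).2 hshift.symm
  have hxy : Commute (a (j + 1)) (a s) :=
    (gen_commute n a hcomm s (j + 1) hs (by omega) (by omega)).symm
  rw [show band a t s = P * a s * P⁻¹ from rfl, hja]
  exact conj_commute P (a (j + 1)) (a s) hxy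

include hcomm in
/-- far case: `j + 2 ≤ s` or `t + 1 ≤ j`. -/
lemma gen_band_commute_far (t s j : ℕ) (hs : 1 ≤ s) (hst : s < t) (hj : 1 ≤ j)
    (ht : t ≤ n) (hjn : j ≤ n - 1) (hfar : j + 2 ≤ s ∨ t + 1 ≤ j) :
    Commute (a j) (band a t s) := by
  have hP : Commute (a j) (descProd a s (t - s - 1)) := by
    refine descProd_commute a _ s _ (fun i hi1 hi2 => ?_)
    rcases hfar with h | h
    · exact gen_commute n a hcomm j i hj (by omega) (by omega)
    · exact (gen_commute n a hcomm i j (by omega) (by omega) hjn).symm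
  have hS : Commute (a j) (a s) := by
    rcases hfar with h | h
    · exact gen_commute n a hcomm j s hj (by omega) (by omega)
    · exact (gen_commute n a hcomm s j hs (by omega) hjn).symm
  exact (hP.mul_right hS).mul_right hP.inv_right

include hbraid hcomm in
lemma band_comm_half (t s r q : ℕ) (ht : t ≤ n) (hst : s < t) (hs : 1 ≤ s)
    (hr : r ≤ n) (hqr : q < r) (hq : 1 ≤ q)
    (hcase : (s < q ∧ r < t) ∨ r < s ∨ t < q) :
    Commute (band a t s) (band a r q) := by
  have hall : ∀ j, q ≤ j → j + 1 ≤ r → Commute (a j) (band a t s) := by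
    intro j h1 h2
    rcases hcase with ⟨h3, h4⟩ | h3 | h3
    · exact gen_band_commute_inner n a hbraid hcomm t s j hs (by omega) (by omega) ht
    · exact gen_band_commute_far n a hcomm t s j hs hst (by omega) ht (by omega)
        (Or.inl (by omega))
    · exact gen_band_commute_far n a hcomm t s j hs hst (by omega) ht (by omega)
        (Or.inr (by omega))
  have h1 : Commute (band a t s) (descProd a q (r - q - 1)) :=
    descProd_commute a _ q _ (fun j hj1 hj2 => (hall j (by omega) (by omega)).symm)
  have h2 : Commute (band a t s) (a q) := (hall q le_rfl (by omega)).symm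
  exact (h1.mul_right h2).mul_right h1.inv_right

end Aux

theorem band_commute {G : Type*} [Group G] (n : ℕ) (a : ℕ → G)
    (hbraid : ∀ i, 1 ≤ i → i + 1 ≤ n - 1 →
      a i * a (i + 1) * a i = a (i + 1) * a i * a (i + 1))
    (hcomm : ∀ i j, 1 ≤ i → i + 2 ≤ j → j ≤ n - 1 → a i * a j = a j * a i) :
    ∀ t s r q, t ≤ n → s < t → 1 ≤ s → r ≤ n → q < r → 1 ≤ q →
      0 < ((t : ℤ) - r) * ((t : ℤ) - q) * ((s : ℤ) - r) * ((s : ℤ) - q) →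
      band a t s * band a r q = band a r q * band a t s := by
  intro t s r q ht hst hs hr hqr hq hpos
  have key : (s < q ∧ r < t) ∨ (q < s ∧ t < r) ∨ r < s ∨ t < q := by
    rcases Nat.lt_trichotomy s q with h | h | h
    · rcases Nat.lt_trichotomy r t with h' | h' | h'
      · exact Or.inl ⟨h, h'⟩
      · exfalso
        have : (t : ℤ) - r = 0 := by omega
        rw [this] at hpos; simp at hpos
      · right; right; right
        by_contra h2
        push_neg at h2
        have e1 : (t : ℤ) - r < 0 := by omega
        have e2 : (s : ℤ) - r < 0 := by omega
        have e3 : (s : ℤ) - q < 0 := by omega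
        rcases eq_or_lt_of_le (show (q : ℤ) ≤ t by omega) with e4 | e4
        · have : (t : ℤ) - q = 0 := by omega
          rw [this] at hpos; simp at hpos
        · have e5 : (0 : ℤ) < (t : ℤ) - q := by omega
          nlinarith [mul_pos (mul_pos (mul_pos (neg_pos.2 e1) e5) (neg_pos.2 e2))
            (neg_pos.2 e3)]
    · exfalso
      have : (s : ℤ) - q = 0 := by omega
      rw [this] at hpos; simp at hpos
    · rcases Nat.lt_trichotomy t r with h' | h' | h'
      · exact Or.inr (Or.inl ⟨h, h'⟩)
      · exfalso
        have : (t : ℤ) - r = 0 := by omega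
        rw [this] at hpos; simp at hpos
      · right; right; left
        by_contra h2
        push_neg at h2
        have e1 : (0 : ℤ) < (t : ℤ) - r := by omega
        have e2 : (0 : ℤ) < (t : ℤ) - q := by omega
        have e3 : (0 : ℤ) < (s : ℤ) - q := by omega
        rcases eq_or_lt_of_le (show (s : ℤ) ≤ r by omega) with e4 | e4
        · have : (s : ℤ) - r = 0 := by omega
          rw [this] at hpos; simp at hpos
        · have e5 : (s : ℤ) - r < 0 := by omega
          nlinarith [mul_pos (mul_pos (mul_pos e1 e2) (neg_pos.2 e5)) e3]
  rcases key with h | h | h | h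
  · exact (band_comm_half n a hbraid hcomm t s r q ht hst hs hr hqr hq
      (Or.inl h)).eq
  · exact ((band_comm_half n a hbraid hcomm r q t s hr hqr hq ht hst hs
      (Or.inl ⟨h.1, h.2⟩)).symm).eq
  · exact (band_comm_half n a hbraid hcomm t s r q ht hst hs hr hqr hq
      (Or.inr (Or.inl h))).eq
  · exact (band_comm_half n a hbraid hcomm t s r q ht hst hs hr hqr hq
      (Or.inr (Or.inr h))).eq
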